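/- For any small category B, the category Lens(B) of lenses over B has binary products: given lenses (f, φ) : A ⇌ B and (g, γ) : C ⇌ B, the pullback category A ×_B C carries a lens structure to B (with Get f∘π₀ = g∘π₁ and Put lifting (⟨a,c⟩, u : fa → b) to the pair (φ(a,u), γ(c,u))), and the projection lenses (π₀, 1×γ) : A×_B C ⇌ A and (π₁, φ×1) : A×_B C ⇌ C exhibit it as the product of (f,φ) and (g,γ) in Lens(B). -/

import Mathlib

open CategoryTheory

universe w v u v₁ u₁ v₂ u₂ v₃ u₃

section Helpers

/-- The hom-type of a category structure, given explicitly. -/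
def homOf {C : Type u₁} (cc : Category.{v₁} C) (x y : C) : Type v₁ :=
  @Quiver.Hom C cc.toCategoryStruct.toQuiver x y

/-- Object part of a functor, with explicit category structures. -/
def objOf {C : Type u₁} {D : Type u₂} (cc : Category.{v₁} C) (cd : Category.{v₂} D)
    (F : @Functor C cc D cd) : C → D := F.obj

/-- Morphism part of a functor, with explicit category structures. -/
def mapOf {C : Type u₁} {D : Type u₂} (cc : Category.{v₁} C) (cd : Category.{v₂} D)
    (F : @Functor C cc D cd) {x y : C} (u : homOf cc x y) :
    homOf cd (objOf cc cd F x) (objOf cc cd F y) := F.map u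

/-- Discrete opfibration: every morphism out of the image of an object has a unique
lift with that source. -/
def IsDiscreteOpfibration {X : Type u₁} {Y : Type u₂} (cx : Category.{v₁} X)
    (cy : Category.{v₂} Y) (F : @Functor X cx Y cy) : Prop :=
  ∀ (x : X) (y : Y) (u : homOf cy (objOf cx cy F x) y),
    ∃! t : (Σ x' : X, homOf cx x x'),
      objOf cx cy F t.1 = y ∧ HEq (mapOf cx cy F t.2) u

/-- Fully faithful, as a property. -/
def IsFullyFaithfulP {X : Type u₁} {Y : Type u₂} (cx : Category.{v₁} X)
    (cy : Category.{v₂} Y) (F : @Functor X cx Y cy) : Prop :=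
  ∀ (x x' : X) (u : homOf cy (objOf cx cy F x) (objOf cx cy F x')),
    ∃! w : homOf cx x x', mapOf cx cy F w = u

end Helpers
/-- An asymmetric delta lens `A ⇌ B`: a Get functor together with a Put operation
lifting morphisms of `B` out of `get.obj a` to morphisms of `A` out of `a`, satisfying
the PutGet, GetPut and PutPut laws. -/
structure Lens (A : Type u₁) (B : Type u₂) [Category.{v₁} A] [Category.{v₂} B] where
  get : A ⥤ B
  tgt : ∀ (a : A) {b : B}, (get.obj a ⟶ b) → A
  put : ∀ (a : A) {b : B} (u : get.obj a ⟶ b), a ⟶ tgt a u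
  obj_tgt : ∀ (a : A) {b : B} (u : get.obj a ⟶ b), get.obj (tgt a u) = b
  putget : ∀ (a : A) {b : B} (u : get.obj a ⟶ b), HEq (get.map (put a u)) u
  tgt_id : ∀ a : A, tgt a (𝟙 (get.obj a)) = a
  getput : ∀ a : A, HEq (put a (𝟙 (get.obj a))) (𝟙 a)
  tgt_comp : ∀ (a : A) {b c : B} (u : get.obj a ⟶ b) (v : b ⟶ c)
    (v' : get.obj (tgt a u) ⟶ c), HEq v' v → tgt a (u ≫ v) = tgt (tgt a u) v'
  putput : ∀ (a : A) {b c : B} (u : get.obj a ⟶ b) (v : b ⟶ c)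
    (v' : get.obj (tgt a u) ⟶ c), HEq v' v →
    HEq (put a (u ≫ v)) (put a u ≫ put (tgt a u) v')
section Pullback

variable {A B C : Type u} [Category.{v} A] [Category.{v} B] [Category.{v} C]

/-- The pullback of two functors in `Cat`: objects are pairs whose images agree. -/
def PB (f : A ⥤ B) (g : C ⥤ B) : Type u := { p : A × C // f.obj p.1 = g.obj p.2 }

/-- Morphisms in the pullback category: pairs of morphisms whose images agree. -/
@[ext] structure PBHom {f : A ⥤ B} {g : C ⥤ B} (x y : PB f g) where
  m1 : x.1.1 ⟶ y.1.1
  m2 : x.1.2 ⟶ y.1.2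
  w : f.map m1 ≫ eqToHom y.2 = eqToHom x.2 ≫ g.map m2

instance PB.category (f : A ⥤ B) (g : C ⥤ B) : Category.{v} (PB f g) where
  Hom x y := PBHom x y
  id x := ⟨𝟙 _, 𝟙 _, by simp⟩
  comp m n := ⟨m.m1 ≫ n.m1, m.m2 ≫ n.m2, by
    rw [Functor.map_comp, Functor.map_comp, Category.assoc, n.w, ← Category.assoc,
      m.w, Category.assoc]⟩
  id_comp m := by apply PBHom.ext <;> simp
  comp_id m := by apply PBHom.ext <;> simp
  assoc m n o := by apply PBHom.ext <;> simp

/-- The first projection of the pullback. -/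
def PB.proj₁ (f : A ⥤ B) (g : C ⥤ B) : PB f g ⥤ A where
  obj x := x.1.1
  map m := m.m1

/-- The second projection of the pullback. -/
def PB.proj₂ (f : A ⥤ B) (g : C ⥤ B) : PB f g ⥤ C where
  obj x := x.1.2
  map m := m.m2

end Pullback

section LensOver

variable {X Y B : Type u} [Category.{v} X] [Category.{v} Y] [Category.{v} B]

/-- A morphism in the category `Lens(B)` of lenses over a base `B`: a functor between
the domains commuting with the Gets and preserving the Puts. -/
structure LensHomOver (l1 : Lens X B) (l2 : Lens Y B) where
  h : X ⥤ Y
  comm : h ⋙ l2.get = l1.get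
  tgt_comm : ∀ (x : X) {b : B} (u : l1.get.obj x ⟶ b)
    (u' : l2.get.obj (h.obj x) ⟶ b), HEq u' u →
    h.obj (l1.tgt x u) = l2.tgt (h.obj x) u'
  put_comm : ∀ (x : X) {b : B} (u : l1.get.obj x ⟶ b)
    (u' : l2.get.obj (h.obj x) ⟶ b), HEq u' u →
    HEq (h.map (l1.put x u)) (l2.put (h.obj x) u')

end LensOver

section MyAux

variable {A B C : Type u} [Category.{v} A] [Category.{v} B] [Category.{v} C]

lemma my_heq_eqToHom_comp {a a' b : B} (h : a' = a) (f : a ⟶ b) :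
    HEq (eqToHom h ≫ f) f := by subst h; simp

lemma my_heq_conj {a a' b b' : B} (h : a' = a) (h' : b = b') (f : a ⟶ b) :
    HEq (eqToHom h ≫ f ≫ eqToHom h') f := by subst h; subst h'; simp

lemma my_heq_hom_eq {a b b' : B} {f : a ⟶ b} {g : a ⟶ b'} (H : HEq f g) (h : b' = b) :
    f = g ≫ eqToHom h := by subst h; simpa using eq_of_heq H

lemma Lens.my_tgt_congr (l : Lens A B) (a : A) {b b' : B} (hb : b = b')
    (u : l.get.obj a ⟶ b) (u' : l.get.obj a ⟶ b') (hu : HEq u u') :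
    l.tgt a u = l.tgt a u' := by subst hb; rw [eq_of_heq hu]

lemma Lens.my_put_congr (l : Lens A B) (a : A) {b b' : B} (hb : b = b')
    (u : l.get.obj a ⟶ b) (u' : l.get.obj a ⟶ b') (hu : HEq u u') :
    HEq (l.put a u) (l.put a u') := by subst hb; rw [eq_of_heq hu]

lemma my_w_aux {a a' b c d : B} (u : a ⟶ b) (h1 : b = c) (h2 : c = d) (h3 : a = a')
    (h4 : a' = a) (h5 : b = d) :
    (u ≫ eqToHom h1) ≫ eqToHom h2 = eqToHom h3 ≫ (eqToHom h4 ≫ u) ≫ eqToHom h5 := by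
  subst h1 h2 h3; simp

lemma my_heq_id {a b : B} (h : a = b) : HEq (𝟙 a) (𝟙 b) := by subst h; rfl

@[simp] lemma PB.id_m1 {f : A ⥤ B} {g : C ⥤ B} (x : PB f g) :
    (𝟙 x : x ⟶ x).m1 = 𝟙 x.1.1 := rfl

@[simp] lemma PB.id_m2 {f : A ⥤ B} {g : C ⥤ B} (x : PB f g) :
    (𝟙 x : x ⟶ x).m2 = 𝟙 x.1.2 := rfl

@[simp] lemma PB.comp_m1 {f : A ⥤ B} {g : C ⥤ B} {x y z : PB f g}
    (m : x ⟶ y) (n : y ⟶ z) : (m ≫ n).m1 = m.m1 ≫ n.m1 := rfl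

@[simp] lemma PB.comp_m2 {f : A ⥤ B} {g : C ⥤ B} {x y z : PB f g}
    (m : x ⟶ y) (n : y ⟶ z) : (m ≫ n).m2 = m.m2 ≫ n.m2 := rfl

lemma PB.obj_ext {f : A ⥤ B} {g : C ⥤ B} {x y : PB f g}
    (h1 : x.1.1 = y.1.1) (h2 : x.1.2 = y.1.2) : x = y :=
  Subtype.ext (Prod.ext h1 h2)

lemma PBHom.heq_ext {f : A ⥤ B} {g : C ⥤ B} {x x' y y' : PB f g}
    (hx : x = x') (hy : y = y') (m : x ⟶ y) (m' : x' ⟶ y')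
    (h1 : HEq m.m1 m'.m1) (h2 : HEq m.m2 m'.m2) : HEq m m' := by
  subst hx; subst hy
  exact heq_of_eq (PBHom.ext (eq_of_heq h1) (eq_of_heq h2))

lemma PB.functor_ext {Q : Type u} [Category.{v} Q] {f : A ⥤ B} {g : C ⥤ B}
    (H H' : Q ⥤ PB f g)
    (h1 : H ⋙ PB.proj₁ f g = H' ⋙ PB.proj₁ f g)
    (h2 : H ⋙ PB.proj₂ f g = H' ⋙ PB.proj₂ f g) : H = H' := by
  apply CategoryTheory.Functor.hext
  · intro q
    exact PB.obj_ext (Functor.congr_obj h1 q) (Functor.congr_obj h2 q)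
  · intro q q' m
    apply PBHom.heq_ext
      (PB.obj_ext (Functor.congr_obj h1 q) (Functor.congr_obj h2 q))
      (PB.obj_ext (Functor.congr_obj h1 q') (Functor.congr_obj h2 q'))
    · show HEq ((H ⋙ PB.proj₁ f g).map m) ((H' ⋙ PB.proj₁ f g).map m)
      rw [Functor.congr_hom h1 m]
      exact my_heq_conj _ _ _
    · show HEq ((H ⋙ PB.proj₂ f g).map m) ((H' ⋙ PB.proj₂ f g).map m)
      rw [Functor.congr_hom h2 m]
      exact my_heq_conj _ _ _

lemma LensHomOver.my_ext {l1 : Lens A B} {l2 : Lens C B}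
    {k k' : LensHomOver l1 l2} (h : k.h = k'.h) : k = k' := by
  cases k; cases k'; cases h; rfl

/-- The product lens on the pullback category. -/
def prodLens (l1 : Lens A B) (l2 : Lens C B) : Lens (PB l1.get l2.get) B where
  get := PB.proj₁ l1.get l2.get ⋙ l1.get
  tgt x _ u := ⟨(l1.tgt x.1.1 u, l2.tgt x.1.2 (eqToHom x.2.symm ≫ u)),
    by exact (l1.obj_tgt x.1.1 u).trans (l2.obj_tgt x.1.2 _).symm⟩
  put x _ u := ⟨l1.put x.1.1 u, l2.put x.1.2 (eqToHom x.2.symm ≫ u), by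
    rw [my_heq_hom_eq (l1.putget x.1.1 u) (l1.obj_tgt x.1.1 u).symm,
        my_heq_hom_eq (l2.putget x.1.2 _) (l2.obj_tgt x.1.2 _).symm]
    exact my_w_aux _ _ _ _ _ _⟩
  obj_tgt x _ u := l1.obj_tgt x.1.1 u
  putget x _ u := l1.putget x.1.1 u
  tgt_id x := by
    apply PB.obj_ext
    · exact l1.tgt_id x.1.1
    · refine (l2.my_tgt_congr x.1.2 x.2 _ (𝟙 _) ?_).trans (l2.tgt_id x.1.2)
      exact (my_heq_eqToHom_comp _ _).trans (my_heq_id x.2)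
  getput x := by
    refine PBHom.heq_ext rfl ?_ _ (𝟙 x) (l1.getput x.1.1) ?_
    · apply PB.obj_ext
      · exact l1.tgt_id x.1.1
      · refine (l2.my_tgt_congr x.1.2 x.2 _ (𝟙 _) ?_).trans (l2.tgt_id x.1.2)
        exact (my_heq_eqToHom_comp _ _).trans (my_heq_id x.2)
    · show HEq (l2.put x.1.2 (eqToHom x.2.symm ≫ 𝟙 _)) (𝟙 x.1.2)
      refine HEq.trans ?_ (l2.getput x.1.2)
      refine l2.my_put_congr x.1.2 x.2 _ (𝟙 _) ?_
      exact (my_heq_eqToHom_comp _ _).trans (my_heq_id x.2)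
  tgt_comp x _ _ u v v' hv := by
    apply PB.obj_ext
    · exact l1.tgt_comp x.1.1 u v v' hv
    · show l2.tgt x.1.2 (eqToHom x.2.symm ≫ (u ≫ v)) = _
      rw [show eqToHom x.2.symm ≫ (u ≫ v) = (eqToHom x.2.symm ≫ u) ≫ v from (Category.assoc _ _ _).symm]
      exact l2.tgt_comp x.1.2 (eqToHom x.2.symm ≫ u) v _
        ((my_heq_eqToHom_comp _ v').trans hv)
  putput x _ _ u v v' hv := by
    refine PBHom.heq_ext rfl ?_ _ _ (l1.putput x.1.1 u v v' hv) ?_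
    · apply PB.obj_ext
      · exact l1.tgt_comp x.1.1 u v v' hv
      · show l2.tgt x.1.2 (eqToHom x.2.symm ≫ (u ≫ v)) = _
        rw [show eqToHom x.2.symm ≫ (u ≫ v) = (eqToHom x.2.symm ≫ u) ≫ v from (Category.assoc _ _ _).symm]
        exact l2.tgt_comp x.1.2 (eqToHom x.2.symm ≫ u) v _
          ((my_heq_eqToHom_comp _ v').trans hv)
    · show HEq (l2.put x.1.2 (eqToHom x.2.symm ≫ (u ≫ v))) _
      rw [show eqToHom x.2.symm ≫ (u ≫ v) = (eqToHom x.2.symm ≫ u) ≫ v from (Category.assoc _ _ _).symm]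
      exact l2.putput x.1.2 (eqToHom x.2.symm ≫ u) v _
        ((my_heq_eqToHom_comp _ v').trans hv)

end MyAux

/-- For any small category `B`, the category `Lens(B)` of lenses over `B` has binary
products: the pullback category `A ×_B C` carries a lens to `B` whose Put lifts
`(⟨a, c⟩, u : fa ⟶ b)` to the pair `(φ(a,u), γ(c,u))`, and the projection lenses
exhibit it as the product of `(f, φ)` and `(g, γ)` in `Lens(B)`. -/
theorem lensOver_products {A B C : Type u} [Category.{v} A] [Category.{v} B]
    [Category.{v} C] (l1 : Lens A B) (l2 : Lens C B) :
    ∃ (lp : Lens (PB l1.get l2.get) B) (p1 : LensHomOver lp l1) (p2 : LensHomOver lp l2),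
      (∀ x : PB l1.get l2.get, lp.get.obj x = l1.get.obj x.1.1) ∧
      (∀ x : PB l1.get l2.get, p1.h.obj x = x.1.1) ∧
      (∀ x : PB l1.get l2.get, p2.h.obj x = x.1.2) ∧
      (∀ (x : PB l1.get l2.get) (b : B) (u : lp.get.obj x ⟶ b)
        (u1 : l1.get.obj x.1.1 ⟶ b) (u2 : l2.get.obj x.1.2 ⟶ b), HEq u1 u → HEq u2 u →
        (lp.tgt x u).1.1 = l1.tgt x.1.1 u1 ∧ (lp.tgt x u).1.2 = l2.tgt x.1.2 u2 ∧
        HEq (PBHom.m1 (lp.put x u)) (l1.put x.1.1 u1) ∧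
        HEq (PBHom.m2 (lp.put x u)) (l2.put x.1.2 u2)) ∧
      ∀ (Q : Type u) [Category.{v} Q] (lq : Lens Q B)
        (q1 : LensHomOver lq l1) (q2 : LensHomOver lq l2),
        ∃! k : LensHomOver lq lp, k.h ⋙ p1.h = q1.h ∧ k.h ⋙ p2.h = q2.h := by
  set lp := prodLens l1 l2 with hlp
  let p1 : LensHomOver lp l1 :=
    { h := PB.proj₁ l1.get l2.get
      comm := rfl
      tgt_comm := fun x {b} u u' hu => by
        obtain rfl : u' = u := eq_of_heq hu
        rfl
      put_comm := fun x {b} u u' hu => by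
        obtain rfl : u' = u := eq_of_heq hu
        exact HEq.rfl }
  let p2 : LensHomOver lp l2 :=
    { h := PB.proj₂ l1.get l2.get
      comm := by
        refine CategoryTheory.Functor.ext (fun (x : PB l1.get l2.get) => x.2.symm) ?_
        intro x y f
        show l2.get.map f.m2 = eqToHom x.2.symm ≫ l1.get.map f.m1 ≫ eqToHom y.2.symm.symm
        rw [f.w]
        simp
      tgt_comm := fun x {b} u u' hu => by
        show l2.tgt x.1.2 (eqToHom x.2.symm ≫ u) = l2.tgt x.1.2 u'
        rw [eq_of_heq (HEq.trans (my_heq_eqToHom_comp x.2.symm u) hu.symm)]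
      put_comm := fun x {b} u u' hu => by
        show HEq (l2.put x.1.2 (eqToHom x.2.symm ≫ u)) (l2.put x.1.2 u')
        rw [eq_of_heq (HEq.trans (my_heq_eqToHom_comp x.2.symm u) hu.symm)] }
  refine ⟨lp, p1, p2, fun x => rfl, fun x => rfl, fun x => rfl, ?_, ?_⟩
  · intro x b u u1 u2 hu1 hu2
    obtain rfl : u1 = u := eq_of_heq hu1
    refine ⟨rfl, ?_, HEq.rfl, ?_⟩
    · exact (l2.my_tgt_congr x.1.2 rfl _ u2
        ((my_heq_eqToHom_comp x.2.symm u1).trans hu2.symm))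
    · exact (l2.my_put_congr x.1.2 rfl _ u2
        ((my_heq_eqToHom_comp x.2.symm u1).trans hu2.symm))
  · intro Q _ lq q1 q2
    have hobj : ∀ q : Q, l1.get.obj (q1.h.obj q) = l2.get.obj (q2.h.obj q) :=
      fun q => (Functor.congr_obj q1.comm q).trans (Functor.congr_obj q2.comm q).symm
    let kfun : Q ⥤ PB l1.get l2.get :=
      { obj := fun q => ⟨(q1.h.obj q, q2.h.obj q), hobj q⟩
        map := fun {q q'} m => ⟨q1.h.map m, q2.h.map m, by
          have e1 := Functor.congr_hom q1.comm m
          have e2 := Functor.congr_hom q2.comm m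
          simp only [Functor.comp_map] at e1 e2
          rw [e1, e2]; simp⟩
        map_id := fun q => by apply PBHom.ext <;> simp <;> rfl
        map_comp := fun m n => by apply PBHom.ext <;> simp <;> rfl }
    have ktgt : ∀ (x : Q) {b : B} (u : lq.get.obj x ⟶ b)
        (u' : lp.get.obj (kfun.obj x) ⟶ b), HEq u' u →
        kfun.obj (lq.tgt x u) = lp.tgt (kfun.obj x) u' := by
      intro x b u u' hu
      apply PB.obj_ext
      · exact q1.tgt_comm x u u' hu
      · exact q2.tgt_comm x u _ ((my_heq_eqToHom_comp _ u').trans hu)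
    refine ⟨{ h := kfun
              comm := q1.comm
              tgt_comm := ktgt
              put_comm := fun x {b} u u' hu =>
                PBHom.heq_ext rfl (ktgt x u u' hu) _ _ (q1.put_comm x u u' hu)
                  (q2.put_comm x u _ ((my_heq_eqToHom_comp _ u').trans hu)) },
      ⟨rfl, rfl⟩, ?_⟩
    intro k' hk
    obtain ⟨hk1, hk2⟩ := hk
    apply LensHomOver.my_ext
    exact PB.functor_ext _ _ (hk1.trans rfl) (hk2.trans rfl)
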